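/- Let l_n := ℓ_0 (zℓ_0)^n act on ℍ = 𝕍[z,z^{-1}] as in the Virasoro setup, and consider the iterated bracket with multiplication operators by odd powers of z: l_{n;k_1,...,k_m} := {...{{l_n, z^{2k_1−1}}, z^{2k_2−1}}, ..., z^{2k_m−1}} (commutator brackets of operators). Then, acting on a monomial z^r φ where φ ∈ 𝕍 satisfies μφ = b·φ and working in the case ρ = 0, one has l_{n;k_1,...,k_m}(z^r φ) = (Δ_{2k_1−1}···Δ_{2k_m−1} ê_{n+1}(n,b))(r) · z^{∑_i(2k_i−1)+r+n} φ, where ê_{n+1}(n,b)(x) = ∏_{i=0}^{n}(x+i+b) and Δ_k is the difference operator. -/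

import Mathlib

/-- The operator `ℓ_0 = z d/dz + μ + 1/2` (the case `ρ = 0`) on `𝕍`-valued Laurent
polynomials: on coefficients, `(ℓ_0 f)_i = i • f_i + μ(f_i) + (1/2) f_i`. -/
noncomputable def ellZero' {V : Type*} [AddCommGroup V] [Module ℂ V]
    (μ : V →ₗ[ℂ] V) (f : ℤ →₀ V) : ℤ →₀ V :=
  f.sum fun i v => Finsupp.single i ((i : ℂ) • v + μ v + (2 : ℂ)⁻¹ • v)

/-- `l_n := ℓ_0 ∘ (M_z ∘ ℓ_0)^n` with `ρ = 0`. -/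
noncomputable def ellOp' {V : Type*} [AddCommGroup V] [Module ℂ V]
    (μ : V →ₗ[ℂ] V) (n : ℕ) : (ℤ →₀ V) → (ℤ →₀ V) :=
  ellZero' μ ∘ (fun f => Finsupp.mapDomain (· + 1) (ellZero' μ f))^[n]

lemma ellZero'_single {V : Type*} [AddCommGroup V] [Module ℂ V]
    (μ : V →ₗ[ℂ] V) (φ : V) (b : ℂ) (hφ : μ φ = b • φ) (c : ℂ) (r : ℤ) :
    ellZero' μ (c • Finsupp.single r φ) = (c * ((r : ℂ) + b + 2⁻¹)) • Finsupp.single r φ := by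
  rw [Finsupp.smul_single, ellZero', Finsupp.sum_single_index (by simp),
    map_smul, hφ, Finsupp.smul_single]
  congr 1
  module

lemma ellOp'_single {V : Type*} [AddCommGroup V] [Module ℂ V]
    (μ : V →ₗ[ℂ] V) (φ : V) (b : ℂ) (hφ : μ φ = b • φ) (n : ℕ) (r : ℤ) :
    ellOp' μ n (Finsupp.single r φ)
      = (∏ i ∈ Finset.range (n + 1), ((r : ℂ) + (i : ℂ) + b + 2⁻¹)) •
          Finsupp.single (r + (n : ℤ)) φ := by
  have key : ∀ n : ℕ, (fun f => Finsupp.mapDomain (· + 1) (ellZero' μ f))^[n]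
      (Finsupp.single r φ)
      = (∏ i ∈ Finset.range n, ((r : ℂ) + (i : ℂ) + b + 2⁻¹)) •
          Finsupp.single (r + (n : ℤ)) φ := by
    intro n
    induction n with
    | zero => simp
    | succ n ih =>
      rw [Function.iterate_succ_apply', ih, ellZero'_single μ φ b hφ,
        Finsupp.smul_single, Finsupp.mapDomain_single, ← Finsupp.smul_single,
        Finset.prod_range_succ]
      have h1 : r + (n : ℤ) + 1 = r + ((n + 1 : ℕ) : ℤ) := by push_cast; ring
      rw [h1]
      congr 1
      push_cast
      ring
  rw [ellOp', Function.comp_apply, key, ellZero'_single μ φ b hφ, Finset.prod_range_succ]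
  congr 1
  push_cast
  ring

lemma foldl_bracket {V : Type*} [AddCommGroup V] [Module ℂ V] (φ : V) :
    ∀ (zs : List ℤ) (cs : List ℂ), zs.map (fun z => (z : ℂ)) = cs →
    ∀ (T : (ℤ →₀ V) → (ℤ →₀ V)) (g : ℂ → ℂ) (d : ℤ),
      (∀ r : ℤ, T (Finsupp.single r φ) = g (r : ℂ) • Finsupp.single (r + d) φ) →
      ∀ r : ℤ,
      (zs.foldl
        (fun T (k : ℤ) => fun f =>
          T (Finsupp.mapDomain (· + (2 * k - 1)) f)
            - Finsupp.mapDomain (· + (2 * k - 1)) (T f)) T) (Finsupp.single r φ)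
        = ((cs.foldl (fun g (k : ℂ) => fun x => g (x + (2 * k - 1)) - g x) g) (r : ℂ)) •
          Finsupp.single (r + d + (zs.map (fun k => 2 * k - 1)).sum) φ := by
  intro zs
  induction zs with
  | nil =>
    rintro cs rfl T g d h r
    simpa using h r
  | cons z zs ih =>
    rintro cs rfl T g d h r
    simp only [List.foldl_cons, List.map_cons, List.sum_cons]
    rw [ih _ rfl _ _ (d + (2 * z - 1))]
    · congr 2
      ring
    · intro r
      rw [Finsupp.mapDomain_single, h, h, Finsupp.mapDomain_smul, Finsupp.mapDomain_single,
        Finsupp.smul_single, Finsupp.smul_single, Finsupp.smul_single]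
      have h1 : r + d + (2 * z - 1) = r + (2 * z - 1) + d := by ring
      have h2 : r + (d + (2 * z - 1)) = r + (2 * z - 1) + d := by ring
      rw [h1, h2, ← Finsupp.single_sub]
      congr 1
      push_cast
      rw [sub_smul]

/-- for `φ` an eigenvector of `μ` with eigenvalue `b`, the iterated
commutator `l_{n;k_1,...,k_m} = {...{{l_n, z^{2k_1-1}}, ...}, z^{2k_m-1}}` acts on
the monomial `z^r φ` by
`l_{n;k_1,...,k_m}(z^r φ) = (Δ_{2k_1-1}···Δ_{2k_m-1} ê_{n+1}(n,b))(r) · z^{∑(2k_i-1)+r+n} φ`,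
where `ê_{n+1}(n,b)(x) = ∏_{i=0}^{n} (x + i + b + 1/2)` (the eigenvalue product of
`ℓ_0 = z d/dz + μ + 1/2`, i.e. with the shift convention `b ↦ b + 1/2`). -/
theorem stmt_11 (V : Type*) [AddCommGroup V] [Module ℂ V]
    (μ : V →ₗ[ℂ] V) (φ : V) (b : ℂ) (hφ : μ φ = b • φ)
    (n : ℕ) (ks : List ℕ) (hks : ∀ k ∈ ks, 1 ≤ k) (r : ℤ) :
    (ks.foldl
        (fun T k => fun f =>
          T (Finsupp.mapDomain (· + (2 * (k : ℤ) - 1)) f)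
            - Finsupp.mapDomain (· + (2 * (k : ℤ) - 1)) (T f))
        (ellOp' μ n)) (Finsupp.single r φ)
      = ((ks.foldl
            (fun g k => fun x => g (x + (2 * (k : ℂ) - 1)) - g x)
            (fun x => ∏ i ∈ Finset.range (n + 1), (x + (i : ℂ) + b + 2⁻¹)))
          (r : ℂ)) •
        Finsupp.single (r + (n : ℤ) + (ks.map (fun k => 2 * (k : ℤ) - 1)).sum) φ := by
  clear hks
  have hcast : ((do let a ← ks; pure ((a:ℤ))) : List ℤ).map (fun z => (z : ℂ))
      = ((do let a ← ks; pure ((a:ℂ))) : List ℂ) := by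
    induction ks with
    | nil => simp
    | cons k ks ih => simp_all
  exact foldl_bracket φ _ _ hcast (ellOp' μ n)
    (fun x => ∏ i ∈ Finset.range (n + 1), (x + (i : ℂ) + b + 2⁻¹))
    (n : ℤ) (fun r => ellOp'_single μ φ b hφ n r) r
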